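/- The quantity √3 · V(π/√3) / (4π²), where V(π/√3) = 2π ∫₀^{π/√3} ∫_{−π/2}^{π/2} τ · sin(τ cos v) dv dτ, satisfies 0.8775 < √3 · V(π/√3) / (4π²) < 0.8776. (This is the density δ(R₄, K₄) ≈ 0.87757183 of the densest multiply transitive geodesic ball packing of the S²×ℝ space group 4q.I.2 (q = 2) of Theorem 2.8; in particular it exceeds the Böröczky–Florian upper bound ≈ 0.85327613 for congruent ball packings of hyperbolic 3-space.) -/

import Mathlib

open Real

/-- The volume of the geodesic ball of radius `ρ` in `S² × ℝ` geometry
(Theorem 2.4 of the paper). -/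
noncomputable def ballVol (ρ : ℝ) : ℝ :=
  2 * π * ∫ τ in (0 : ℝ)..ρ, ∫ v in (-(π / 2))..(π / 2), τ * Real.sin (τ * Real.cos v)

open intervalIntegral

private lemma nonneg_of_hasDerivAt (F F' : ℝ → ℝ) (hF : ∀ y, HasDerivAt F (F' y) y)
    (h0 : F 0 = 0) (hF' : ∀ y, 0 ≤ y → 0 ≤ F' y) : ∀ x, 0 ≤ x → 0 ≤ F x := by
  intro x hx
  have mono : MonotoneOn F (Set.Ici 0) := by
    apply monotoneOn_of_deriv_nonneg (convex_Ici 0)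
    · exact (continuous_iff_continuousAt.2 fun y => (hF y).continuousAt).continuousOn
    · exact fun y _ => (hF y).differentiableAt.differentiableWithinAt
    · intro y hy
      rw [(hF y).deriv]
      rw [interior_Ici] at hy
      exact hF' y hy.le
  have := mono (Set.self_mem_Ici) hx hx
  linarith [h0]

private lemma sin_ge_3 (x : ℝ) (hx : 0 ≤ x) : x - x^3/6 ≤ Real.sin x := by
  have h := nonneg_of_hasDerivAt (fun y => Real.sin y - y + y^3/6)
    (fun y => Real.cos y - 1 + y^2/2)
    (fun y => by
      have := ((Real.hasDerivAt_sin y).sub (hasDerivAt_id y)).add ((hasDerivAt_pow 3 y).div_const 6)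
      refine this.congr_deriv ?_
      push_cast; ring)
    (by norm_num)
    (fun y _ => by nlinarith [Real.one_sub_sq_div_two_le_cos (x := y)])
  have := h x hx; linarith

private lemma cos_le_4 (x : ℝ) (hx : 0 ≤ x) : Real.cos x ≤ 1 - x^2/2 + x^4/24 := by
  have h := nonneg_of_hasDerivAt (fun y => 1 - y^2/2 + y^4/24 - Real.cos y)
    (fun y => Real.sin y - y + y^3/6)
    (fun y => by
      have := (((hasDerivAt_const y (1:ℝ)).sub ((hasDerivAt_pow 2 y).div_const 2)).add
        ((hasDerivAt_pow 4 y).div_const 24)).sub (Real.hasDerivAt_cos y)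
      refine this.congr_deriv ?_
      push_cast; ring)
    (by norm_num)
    (fun y hy => by nlinarith [sin_ge_3 y hy])
  have := h x hx; linarith

private lemma sin_le_5 (x : ℝ) (hx : 0 ≤ x) : Real.sin x ≤ x - x^3/6 + x^5/120 := by
  have h := nonneg_of_hasDerivAt (fun y => y - y^3/6 + y^5/120 - Real.sin y)
    (fun y => 1 - y^2/2 + y^4/24 - Real.cos y)
    (fun y => by
      have := (((hasDerivAt_id y).sub ((hasDerivAt_pow 3 y).div_const 6)).add
        ((hasDerivAt_pow 5 y).div_const 120)).sub (Real.hasDerivAt_sin y)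
      refine this.congr_deriv ?_
      push_cast; ring)
    (by norm_num)
    (fun y hy => by nlinarith [cos_le_4 y hy])
  have := h x hx; linarith

private lemma cos_ge_6 (x : ℝ) (hx : 0 ≤ x) : 1 - x^2/2 + x^4/24 - x^6/720 ≤ Real.cos x := by
  have h := nonneg_of_hasDerivAt (fun y => Real.cos y - (1 - y^2/2 + y^4/24 - y^6/720))
    (fun y => (y - y^3/6 + y^5/120) - Real.sin y)
    (fun y => by
      have := (Real.hasDerivAt_cos y).sub ((((hasDerivAt_const y (1:ℝ)).sub
        ((hasDerivAt_pow 2 y).div_const 2)).add ((hasDerivAt_pow 4 y).div_const 24)).sub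
        ((hasDerivAt_pow 6 y).div_const 720))
      refine this.congr_deriv ?_
      push_cast; ring)
    (by norm_num)
    (fun y hy => by nlinarith [sin_le_5 y hy])
  have := h x hx; linarith

private lemma sin_ge_7 (x : ℝ) (hx : 0 ≤ x) : x - x^3/6 + x^5/120 - x^7/5040 ≤ Real.sin x := by
  have h := nonneg_of_hasDerivAt (fun y => Real.sin y - (y - y^3/6 + y^5/120 - y^7/5040))
    (fun y => Real.cos y - (1 - y^2/2 + y^4/24 - y^6/720))
    (fun y => by
      have := (Real.hasDerivAt_sin y).sub ((((hasDerivAt_id y).sub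
        ((hasDerivAt_pow 3 y).div_const 6)).add ((hasDerivAt_pow 5 y).div_const 120)).sub
        ((hasDerivAt_pow 7 y).div_const 5040))
      refine this.congr_deriv ?_
      push_cast; ring)
    (by norm_num)
    (fun y hy => by nlinarith [cos_ge_6 y hy])
  have := h x hx; linarith

private lemma cos_le_8 (x : ℝ) (hx : 0 ≤ x) :
    Real.cos x ≤ 1 - x^2/2 + x^4/24 - x^6/720 + x^8/40320 := by
  have h := nonneg_of_hasDerivAt
    (fun y => (1 - y^2/2 + y^4/24 - y^6/720 + y^8/40320) - Real.cos y)
    (fun y => Real.sin y - (y - y^3/6 + y^5/120 - y^7/5040))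
    (fun y => by
      have := (((((hasDerivAt_const y (1:ℝ)).sub ((hasDerivAt_pow 2 y).div_const 2)).add
        ((hasDerivAt_pow 4 y).div_const 24)).sub ((hasDerivAt_pow 6 y).div_const 720)).add
        ((hasDerivAt_pow 8 y).div_const 40320)).sub (Real.hasDerivAt_cos y)
      refine this.congr_deriv ?_
      push_cast; ring)
    (by norm_num)
    (fun y hy => by nlinarith [sin_ge_7 y hy])
  have := h x hx; linarith

private lemma sin_le_9 (x : ℝ) (hx : 0 ≤ x) :
    Real.sin x ≤ x - x^3/6 + x^5/120 - x^7/5040 + x^9/362880 := by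
  have h := nonneg_of_hasDerivAt
    (fun y => (y - y^3/6 + y^5/120 - y^7/5040 + y^9/362880) - Real.sin y)
    (fun y => (1 - y^2/2 + y^4/24 - y^6/720 + y^8/40320) - Real.cos y)
    (fun y => by
      have := (((((hasDerivAt_id y).sub ((hasDerivAt_pow 3 y).div_const 6)).add
        ((hasDerivAt_pow 5 y).div_const 120)).sub ((hasDerivAt_pow 7 y).div_const 5040)).add
        ((hasDerivAt_pow 9 y).div_const 362880)).sub (Real.hasDerivAt_sin y)
      refine this.congr_deriv ?_
      push_cast; ring)
    (by norm_num)
    (fun y hy => by nlinarith [cos_le_8 y hy])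
  have := h x hx; linarith

private lemma J1 : ∫ v in (-(π/2))..(π/2), Real.cos v = 2 := by
  rw [integral_cos]; simp; norm_num

private lemma Jstep (n : ℕ) :
    (∫ v in (-(π/2))..(π/2), Real.cos v ^ (n + 2)) =
      (n + 1) / (n + 2) * ∫ v in (-(π/2))..(π/2), Real.cos v ^ n := by
  rw [integral_cos_pow]
  simp [Real.cos_pi_div_two, zero_pow (Nat.succ_ne_zero n)]

private lemma J3 : ∫ v in (-(π/2))..(π/2), Real.cos v ^ 3 = 4/3 := by
  have h := Jstep 1
  simp only [pow_one] at h
  rw [J1] at h; rw [show (4/3:ℝ) = (↑(1:ℕ)+1)/(↑(1:ℕ)+2)*2 by norm_num, ← h]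

private lemma J5 : ∫ v in (-(π/2))..(π/2), Real.cos v ^ 5 = 16/15 := by
  have h := Jstep 3
  rw [show (5 : ℕ) = 3 + 2 from rfl, h, J3]; norm_num

private lemma J7 : ∫ v in (-(π/2))..(π/2), Real.cos v ^ 7 = 32/35 := by
  have h := Jstep 5
  rw [show (7 : ℕ) = 5 + 2 from rfl, h, J5]; norm_num

private lemma J9 : ∫ v in (-(π/2))..(π/2), Real.cos v ^ 9 = 256/315 := by
  have h := Jstep 7
  rw [show (9 : ℕ) = 7 + 2 from rfl, h, J7]; norm_num

private lemma integral_comb (A B C D E : ℝ) :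
    (∫ v in (-(π/2))..(π/2), (A * Real.cos v + B * Real.cos v ^ 3 + C * Real.cos v ^ 5
        + D * Real.cos v ^ 7 + E * Real.cos v ^ 9))
      = 2*A + (4/3)*B + (16/15)*C + (32/35)*D + (256/315)*E := by
  rw [integral_add (by apply Continuous.intervalIntegrable; fun_prop)
        (by apply Continuous.intervalIntegrable; fun_prop),
      integral_add (by apply Continuous.intervalIntegrable; fun_prop)
        (by apply Continuous.intervalIntegrable; fun_prop),
      integral_add (by apply Continuous.intervalIntegrable; fun_prop)
        (by apply Continuous.intervalIntegrable; fun_prop),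
      integral_add (by apply Continuous.intervalIntegrable; fun_prop)
        (by apply Continuous.intervalIntegrable; fun_prop)]
  simp only [integral_const_mul]
  rw [J1, J3, J5, J7, J9]; ring
private lemma inner_ge (τ : ℝ) (hτ : 0 ≤ τ) :
    2*τ^2 - 2*τ^4/9 + 2*τ^6/225 - 2*τ^8/11025
      ≤ ∫ v in (-(π/2))..(π/2), τ * Real.sin (τ * Real.cos v) := by
  have hab : -(π/2) ≤ π/2 := by linarith [pi_pos]
  have h := integral_mono_on (μ := MeasureTheory.volume) hab
    (f := fun v => τ^2 * Real.cos v + (-(τ^4/6)) * Real.cos v ^ 3 + (τ^6/120) * Real.cos v ^ 5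
      + (-(τ^8/5040)) * Real.cos v ^ 7 + 0 * Real.cos v ^ 9)
    (g := fun v => τ * Real.sin (τ * Real.cos v))
    (by apply Continuous.intervalIntegrable; fun_prop)
    (by apply Continuous.intervalIntegrable; fun_prop)
    (fun v hv => by
      have hc : 0 ≤ Real.cos v := Real.cos_nonneg_of_mem_Icc hv
      have hx : 0 ≤ τ * Real.cos v := mul_nonneg hτ hc
      have hs := sin_ge_7 _ hx
      calc τ^2 * Real.cos v + (-(τ^4/6)) * Real.cos v ^ 3 + (τ^6/120) * Real.cos v ^ 5
            + (-(τ^8/5040)) * Real.cos v ^ 7 + 0 * Real.cos v ^ 9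
          = τ * ((τ * Real.cos v) - (τ * Real.cos v)^3/6 + (τ * Real.cos v)^5/120
              - (τ * Real.cos v)^7/5040) := by ring
        _ ≤ τ * Real.sin (τ * Real.cos v) := mul_le_mul_of_nonneg_left hs hτ)
  rw [integral_comb] at h
  calc 2*τ^2 - 2*τ^4/9 + 2*τ^6/225 - 2*τ^8/11025
      = 2*(τ^2) + (4/3)*(-(τ^4/6)) + (16/15)*(τ^6/120) + (32/35)*(-(τ^8/5040)) + (256/315)*0 := by
        ring
    _ ≤ _ := h

private lemma inner_le (τ : ℝ) (hτ : 0 ≤ τ) :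
    (∫ v in (-(π/2))..(π/2), τ * Real.sin (τ * Real.cos v))
      ≤ 2*τ^2 - 2*τ^4/9 + 2*τ^6/225 - 2*τ^8/11025 + 2*τ^10/893025 := by
  have hab : -(π/2) ≤ π/2 := by linarith [pi_pos]
  have h := integral_mono_on (μ := MeasureTheory.volume) hab
    (f := fun v => τ * Real.sin (τ * Real.cos v))
    (g := fun v => τ^2 * Real.cos v + (-(τ^4/6)) * Real.cos v ^ 3 + (τ^6/120) * Real.cos v ^ 5
      + (-(τ^8/5040)) * Real.cos v ^ 7 + (τ^10/362880) * Real.cos v ^ 9)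
    (by apply Continuous.intervalIntegrable; fun_prop)
    (by apply Continuous.intervalIntegrable; fun_prop)
    (fun v hv => by
      have hc : 0 ≤ Real.cos v := Real.cos_nonneg_of_mem_Icc hv
      have hx : 0 ≤ τ * Real.cos v := mul_nonneg hτ hc
      have hs := sin_le_9 _ hx
      calc τ * Real.sin (τ * Real.cos v)
          ≤ τ * ((τ * Real.cos v) - (τ * Real.cos v)^3/6 + (τ * Real.cos v)^5/120
              - (τ * Real.cos v)^7/5040 + (τ * Real.cos v)^9/362880) :=
            mul_le_mul_of_nonneg_left hs hτ
        _ = τ^2 * Real.cos v + (-(τ^4/6)) * Real.cos v ^ 3 + (τ^6/120) * Real.cos v ^ 5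
            + (-(τ^8/5040)) * Real.cos v ^ 7 + (τ^10/362880) * Real.cos v ^ 9 := by ring)
  rw [integral_comb] at h
  calc (∫ v in (-(π/2))..(π/2), τ * Real.sin (τ * Real.cos v)) ≤ _ := h
    _ = 2*τ^2 - 2*τ^4/9 + 2*τ^6/225 - 2*τ^8/11025 + 2*τ^10/893025 := by ring

private lemma integral_poly (R a2 a4 a6 a8 a10 : ℝ) :
    (∫ τ in (0:ℝ)..R, (a2 * τ^2 + a4 * τ^4 + a6 * τ^6 + a8 * τ^8 + a10 * τ^10))
      = a2 * R^3/3 + a4 * R^5/5 + a6 * R^7/7 + a8 * R^9/9 + a10 * R^11/11 := by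
  rw [integral_add (by apply Continuous.intervalIntegrable; fun_prop)
        (by apply Continuous.intervalIntegrable; fun_prop),
      integral_add (by apply Continuous.intervalIntegrable; fun_prop)
        (by apply Continuous.intervalIntegrable; fun_prop),
      integral_add (by apply Continuous.intervalIntegrable; fun_prop)
        (by apply Continuous.intervalIntegrable; fun_prop),
      integral_add (by apply Continuous.intervalIntegrable; fun_prop)
        (by apply Continuous.intervalIntegrable; fun_prop)]
  simp only [integral_const_mul, integral_pow]
  norm_num; ring
private lemma contF : Continuous fun τ : ℝ => ∫ v in (-(π/2))..(π/2), τ * Real.sin (τ * Real.cos v) := by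
  apply intervalIntegral.continuous_parametric_intervalIntegral_of_continuous'
    (f := fun τ v => τ * Real.sin (τ * Real.cos v))
  fun_prop

private lemma outer_bounds (R : ℝ) (hR : 0 ≤ R) :
    (2*R^3/3 - 2*R^5/45 + 2*R^7/1575 - 2*R^9/99225
        ≤ ∫ τ in (0:ℝ)..R, ∫ v in (-(π/2))..(π/2), τ * Real.sin (τ * Real.cos v))
      ∧ (∫ τ in (0:ℝ)..R, ∫ v in (-(π/2))..(π/2), τ * Real.sin (τ * Real.cos v))
        ≤ 2*R^3/3 - 2*R^5/45 + 2*R^7/1575 - 2*R^9/99225 + 2*R^11/9823275 := by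
  constructor
  · have h := integral_mono_on (μ := MeasureTheory.volume) hR
      (f := fun τ => 2 * τ^2 + (-(2/9)) * τ^4 + (2/225) * τ^6 + (-(2/11025)) * τ^8 + 0 * τ^10)
      (g := fun τ => ∫ v in (-(π/2))..(π/2), τ * Real.sin (τ * Real.cos v))
      (by apply Continuous.intervalIntegrable; fun_prop)
      (contF.intervalIntegrable _ _)
      (fun τ hτ => by
        have := inner_ge τ hτ.1
        calc 2 * τ^2 + (-(2/9)) * τ^4 + (2/225) * τ^6 + (-(2/11025)) * τ^8 + 0 * τ^10
            = 2*τ^2 - 2*τ^4/9 + 2*τ^6/225 - 2*τ^8/11025 := by ring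
          _ ≤ _ := this)
    rw [integral_poly] at h
    calc 2*R^3/3 - 2*R^5/45 + 2*R^7/1575 - 2*R^9/99225
        = 2 * R^3/3 + (-(2/9)) * R^5/5 + (2/225) * R^7/7 + (-(2/11025)) * R^9/9 + 0 * R^11/11 := by
          ring
      _ ≤ _ := h
  · have h := integral_mono_on (μ := MeasureTheory.volume) hR
      (f := fun τ => ∫ v in (-(π/2))..(π/2), τ * Real.sin (τ * Real.cos v))
      (g := fun τ => 2 * τ^2 + (-(2/9)) * τ^4 + (2/225) * τ^6 + (-(2/11025)) * τ^8
        + (2/893025) * τ^10)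
      (contF.intervalIntegrable _ _)
      (by apply Continuous.intervalIntegrable; fun_prop)
      (fun τ hτ => by
        have := inner_le τ hτ.1
        calc (∫ v in (-(π/2))..(π/2), τ * Real.sin (τ * Real.cos v))
            ≤ 2*τ^2 - 2*τ^4/9 + 2*τ^6/225 - 2*τ^8/11025 + 2*τ^10/893025 := this
          _ = 2 * τ^2 + (-(2/9)) * τ^4 + (2/225) * τ^6 + (-(2/11025)) * τ^8
              + (2/893025) * τ^10 := by ring)
    rw [integral_poly] at h
    calc (∫ τ in (0:ℝ)..R, ∫ v in (-(π/2))..(π/2), τ * Real.sin (τ * Real.cos v)) ≤ _ := h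
      _ = 2*R^3/3 - 2*R^5/45 + 2*R^7/1575 - 2*R^9/99225 + 2*R^11/9823275 := by ring


/-- The density `δ(R₄, K₄) ≈ 0.87757183` of the densest multiply transitive geodesic
ball packing of the `S² × ℝ` space group 4q.I.2 (q = 2) of Theorem 2.8, with ball
radius `R₄ = π/√3` and Dirichlet–Voronoi cell of volume `4π²/√3`. -/
theorem density_R4_bounds :
    0.8775 < Real.sqrt 3 * ballVol (π / Real.sqrt 3) / (4 * π ^ 2) ∧
      Real.sqrt 3 * ballVol (π / Real.sqrt 3) / (4 * π ^ 2) < 0.8776 := by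
  have hπ : 0 < π := pi_pos
  have hπl : 3.141592 < π := pi_gt_d6
  have hπu : π < 3.141593 := pi_lt_d6
  have hs0 : 0 < Real.sqrt 3 := by positivity
  have hsl : (1.7320508 : ℝ) < Real.sqrt 3 := by
    rw [show (1.7320508 : ℝ) = Real.sqrt (1.7320508^2) from (Real.sqrt_sq (by norm_num)).symm]
    exact Real.sqrt_lt_sqrt (by positivity) (by norm_num)
  have hsu : Real.sqrt 3 < (1.7320509 : ℝ) := by
    rw [show (1.7320509 : ℝ) = Real.sqrt (1.7320509^2) from (Real.sqrt_sq (by norm_num)).symm]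
    exact Real.sqrt_lt_sqrt (by norm_num) (by norm_num)
  set R := π / Real.sqrt 3 with hRdef
  have hR0 : 0 ≤ R := by positivity
  have hr1 : (1.813798 : ℝ) ≤ R := by
    rw [hRdef, le_div_iff₀ hs0]
    nlinarith
  have hr2 : R ≤ (1.8137996 : ℝ) := by
    rw [hRdef, div_le_iff₀ hs0]
    nlinarith
  obtain ⟨hlo, hhi⟩ := outer_bounds R hR0
  set I := ∫ τ in (0:ℝ)..R, ∫ v in (-(π/2))..(π/2), τ * Real.sin (τ * Real.cos v) with hI
  have hIlo : (3.1833293 : ℝ) ≤ I := by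
    refine le_trans ?_ hlo
    have h1 : (2:ℝ)*(1.813798:ℝ)^3/3 - 2*(1.8137996:ℝ)^5/45 + 2*(1.813798:ℝ)^7/1575
        - 2*(1.8137996:ℝ)^9/99225 ≤ 2*R^3/3 - 2*R^5/45 + 2*R^7/1575 - 2*R^9/99225 := by
      gcongr <;> norm_num
    refine le_trans ?_ h1
    norm_num
  have hIhi : I ≤ (3.1834867 : ℝ) := by
    refine le_trans hhi ?_
    have h1 : 2*R^3/3 - 2*R^5/45 + 2*R^7/1575 - 2*R^9/99225 + 2*R^11/9823275
        ≤ (2:ℝ)*(1.8137996:ℝ)^3/3 - 2*(1.813798:ℝ)^5/45 + 2*(1.8137996:ℝ)^7/1575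
          - 2*(1.813798:ℝ)^9/99225 + 2*(1.8137996:ℝ)^11/9823275 := by
      gcongr <;> norm_num
    refine le_trans h1 ?_
    norm_num
  have hIpos : 0 < I := by linarith
  have hval : Real.sqrt 3 * ballVol R / (4 * π ^ 2) = Real.sqrt 3 * I / (2 * π) := by
    rw [ballVol, ← hI]
    field_simp
    ring
  rw [hval]
  constructor
  · rw [lt_div_iff₀ (by positivity)]
    nlinarith
  · rw [div_lt_iff₀ (by positivity)]
    nlinarith
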